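/- Let Γ be a finite group and G a Γ-group possessing a finite decreasing filtration G = U₀ ⊇ U₁ ⊇ ⋯ ⊇ Uₙ = 1 by Γ-stable normal subgroups of G such that each quotient Uᵢ/Uᵢ₊₁ is abelian and multiplication by #Γ is bijective on Uᵢ/Uᵢ₊₁. Then H¹(Γ, G) is trivial: every 1-cocycle z : Γ → G is of the form z(σ) = g⁻¹·(σ·g) for some g ∈ G. -/

import Mathlib

open scoped IsMulCommutative in
/-- Key step: killing a cocycle with values in `U i` modulo `U (i+1)`. -/
theorem step_aux {Γ G : Type*} [Group Γ] [Fintype Γ] [Group G]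
    [MulDistribMulAction Γ G] (U : ℕ → Subgroup G) (i : ℕ)
    (hnormal : (U (i + 1)).Normal)
    (hstable : ∀ j, ∀ σ : Γ, ∀ x ∈ U j, σ • x ∈ U j)
    (habelian : ∀ x ∈ U i, ∀ y ∈ U i, x * y * x⁻¹ * y⁻¹ ∈ U (i + 1))
    (hinj : ∀ x ∈ U i, x ^ (Fintype.card Γ) ∈ U (i + 1) → x ∈ U (i + 1))
    (hsurj : ∀ x ∈ U i, ∃ y ∈ U i, y ^ (Fintype.card Γ) * x⁻¹ ∈ U (i + 1))
    (w : Γ → G) (hw : ∀ σ τ : Γ, w (σ * τ) = w σ * σ • w τ)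
    (hmem : ∀ σ, w σ ∈ U i) :
    ∃ h ∈ U i, ∀ σ : Γ, h⁻¹ * w σ * σ • h ∈ U (i + 1) := by
  haveI := hnormal
  set N := Fintype.card Γ with hN
  set V := U (i + 1) with hV
  let π : G →* G ⧸ V := QuotientGroup.mk' V
  -- commutation in the quotient
  have hcomm : ∀ x ∈ U i, ∀ y ∈ U i, π x * π y = π y * π x := by
    intro x hx y hy
    have : π (x * y) = π (y * x) := by
      rw [QuotientGroup.mk'_eq_mk']
      exact ⟨(y * x)⁻¹ * (x * y * x⁻¹ * y⁻¹)⁻¹ * (y * x), by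
        have := habelian x hx y hy
        have h2 := Subgroup.Normal.conj_mem hnormal _ (Subgroup.inv_mem _ this) (y * x)⁻¹
        simpa using h2, by group⟩
    simpa using this
  let S : Subgroup (G ⧸ V) := (U i).map π
  haveI hScomm : IsMulCommutative S := by
    constructor
    constructor
    rintro ⟨a, ha⟩ ⟨b, hb⟩
    obtain ⟨x, hx, rfl⟩ := ha
    obtain ⟨y, hy, rfl⟩ := hb
    ext
    exact hcomm x hx y hy
  -- the cocycle in S
  let a : Γ → S := fun σ => ⟨π (w σ), Subgroup.mem_map_of_mem π (hmem σ)⟩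
  let C : S := ∏ τ : Γ, a τ
  -- a concrete representative of the product
  let c : G := ((Finset.univ : Finset Γ).toList.map w).prod
  have hc : c ∈ U i := by
    apply Subgroup.list_prod_mem
    intro x hx
    simp only [List.mem_map] at hx
    obtain ⟨τ, _, rfl⟩ := hx
    exact hmem τ
  have hπc : π c = (C : G ⧸ V) := by
    have h1 : π c = (((Finset.univ : Finset Γ).toList.map w).map π).prod := by
      simp [c, map_list_prod, List.map_map, Function.comp]
    have h2 : (((Finset.univ : Finset Γ).toList.map w).map π).prod
        = ((((Finset.univ : Finset Γ).toList.map a)).map (S.subtype)).prod := by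
      rw [List.map_map, List.map_map]
      rfl
    have h3 : ((((Finset.univ : Finset Γ).toList.map a)).map (S.subtype)).prod
        = (S.subtype) (((Finset.univ : Finset Γ).toList.map a).prod) := by
      rw [map_list_prod]
    have h4 : ((Finset.univ : Finset Γ).toList.map a).prod = C :=
      Finset.prod_map_toList _ _
    rw [h1, h2, h3, h4]
    rfl
  -- the key cocycle identity: π (σ • c) = (a σ)⁻¹ ^ N * C
  have hkey : ∀ σ : Γ, (⟨π (σ • c), Subgroup.mem_map_of_mem π (hstable i σ c hc)⟩ : S)
      = (a σ)⁻¹ ^ N * C := by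
    intro σ
    -- σ • c as a list product
    have hsc : σ • c = ((Finset.univ : Finset Γ).toList.map (fun τ => σ • w τ)).prod := by
      have := map_list_prod (MulDistribMulAction.toMonoidHom G σ)
        ((Finset.univ : Finset Γ).toList.map w)
      simpa [c, List.map_map, Function.comp_def] using this
    have hcocy : ∀ τ : Γ, σ • w τ = (w σ)⁻¹ * w (σ * τ) := by
      intro τ
      have := hw σ τ
      rw [this]; group
    let a' : Γ → S := fun τ => ⟨π (σ • w τ), by
      exact Subgroup.mem_map_of_mem π (hstable i σ (w τ) (hmem τ))⟩
    have ha' : ∀ τ, a' τ = (a σ)⁻¹ * a (σ * τ) := by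
      intro τ
      ext
      show π (σ • w τ) = (π (w σ))⁻¹ * π (w (σ * τ))
      rw [hcocy τ]
      simp
    have h1a : π (σ • c)
        = ((Finset.univ : Finset Γ).toList.map (fun τ => π (σ • w τ))).prod := by
      rw [hsc, map_list_prod, List.map_map]
      rfl
    have h1b : (S.subtype) (((Finset.univ : Finset Γ).toList.map a').prod)
        = ((Finset.univ : Finset Γ).toList.map (fun τ => π (σ • w τ))).prod := by
      rw [map_list_prod, List.map_map]
      rfl
    have h1 : π (σ • c) = (S.subtype) (((Finset.univ : Finset Γ).toList.map a').prod) :=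
      h1a.trans h1b.symm
    have h2 : ((Finset.univ : Finset Γ).toList.map a').prod = ∏ τ : Γ, a' τ :=
      Finset.prod_map_toList _ _
    have h3 : (∏ τ : Γ, a' τ) = (a σ)⁻¹ ^ N * C := by
      simp only [ha']
      rw [Finset.prod_mul_distrib, Finset.prod_const, Finset.card_univ]
      congr 1
      exact Fintype.prod_equiv (Equiv.mulLeft σ) _ _ (fun τ => rfl)
    ext
    show π (σ • c) = ((a σ)⁻¹ ^ N * C : S)
    rw [h1, h2, h3]
    rfl
  -- choose h with h ^ N ≡ c
  obtain ⟨h, hh, hhc⟩ := hsurj c hc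
  refine ⟨h, hh, ?_⟩
  intro σ
  set x := h⁻¹ * w σ * σ • h with hx
  have hxU : x ∈ U i := by
    exact Subgroup.mul_mem _ (Subgroup.mul_mem _ (Subgroup.inv_mem _ hh) (hmem σ))
      (hstable i σ h hh)
  apply hinj x hxU
  -- show π (x ^ N) = 1
  rw [← QuotientGroup.eq_one_iff]
  show π (x ^ N) = 1
  rw [map_pow]
  -- work in S
  let X : S := ⟨π x, Subgroup.mem_map_of_mem π hxU⟩
  let H : S := ⟨π h, Subgroup.mem_map_of_mem π hh⟩
  let Hσ : S := ⟨π (σ • h), Subgroup.mem_map_of_mem π (hstable i σ h hh)⟩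
  have hHN : H ^ N = ⟨π c, Subgroup.mem_map_of_mem π hc⟩ := by
    ext
    show (π h) ^ N = π c
    rw [← map_pow]
    have h5 : π (h ^ N * c⁻¹) = 1 := (QuotientGroup.eq_one_iff _).mpr hhc
    rw [map_mul, map_inv, mul_inv_eq_one] at h5
    exact h5
  have hHσN : Hσ ^ N = (a σ)⁻¹ ^ N * C := by
    rw [← hkey σ]
    ext
    show (π (σ • h)) ^ N = π (σ • c)
    rw [← map_pow, ← smul_pow']
    -- h ^ N = (h ^ N * c⁻¹) * c
    have hv : σ • (h ^ N) = (σ • (h ^ N * c⁻¹)) * σ • c := by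
      rw [← smul_mul']; group
    rw [hv, map_mul]
    have : π (σ • (h ^ N * c⁻¹)) = 1 :=
      (QuotientGroup.eq_one_iff _).mpr (hstable (i + 1) σ _ hhc)
    rw [this, one_mul]
  have hX : X = H⁻¹ * a σ * Hσ := by
    ext
    show π x = (π h)⁻¹ * π (w σ) * π (σ • h)
    rw [hx]
    simp
  have hXN : X ^ N = 1 := by
    rw [hX, mul_pow, mul_pow, inv_pow, hHN, hHσN]
    have : (⟨π c, Subgroup.mem_map_of_mem π hc⟩ : S) = C := by
      ext; exact hπc
    rw [this]
    group
  have : ((X : S) : G ⧸ V) ^ N = 1 := by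
    rw [← Subgroup.coe_pow, hXN, Subgroup.coe_one]
  exact this

/-- Let Γ be a finite group and G a Γ-group with a finite decreasing filtration
G = U₀ ⊇ U₁ ⊇ ⋯ ⊇ Uₙ = 1 by Γ-stable normal subgroups with abelian quotients
Uᵢ/Uᵢ₊₁ on which multiplication by #Γ is bijective.  Then H¹(Γ, G) = 1:
every 1-cocycle is a coboundary. -/
theorem stmt_6 (Γ G : Type*) [Group Γ] [Fintype Γ] [Group G]
    [MulDistribMulAction Γ G] (n : ℕ) (U : ℕ → Subgroup G)
    (htop : U 0 = ⊤) (hbot : U n = ⊥)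
    (hdec : ∀ i, U (i + 1) ≤ U i)
    (hnormal : ∀ i, (U i).Normal)
    (hstable : ∀ i, ∀ σ : Γ, ∀ x ∈ U i, σ • x ∈ U i)
    -- Uᵢ/Uᵢ₊₁ is abelian:
    (habelian : ∀ i, ∀ x ∈ U i, ∀ y ∈ U i, x * y * x⁻¹ * y⁻¹ ∈ U (i + 1))
    -- multiplication by #Γ is injective on Uᵢ/Uᵢ₊₁:
    (hinjcard : ∀ i, ∀ x ∈ U i, x ^ (Fintype.card Γ) ∈ U (i + 1) → x ∈ U (i + 1))
    -- multiplication by #Γ is surjective on Uᵢ/Uᵢ₊₁: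
    (hsurjcard : ∀ i, ∀ x ∈ U i, ∃ y ∈ U i, y ^ (Fintype.card Γ) * x⁻¹ ∈ U (i + 1))
    (z : Γ → G) (hz : ∀ σ τ : Γ, z (σ * τ) = z σ * σ • z τ) :
    ∃ g : G, ∀ σ : Γ, z σ = g⁻¹ * σ • g := by
  have main : ∀ i, ∃ g : G, ∀ σ : Γ, g⁻¹ * z σ * σ • g ∈ U i := by
    intro i
    induction i with
    | zero =>
      exact ⟨1, fun σ => by rw [htop]; exact Subgroup.mem_top _⟩
    | succ i ih =>
      obtain ⟨g, hg⟩ := ih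
      set w : Γ → G := fun σ => g⁻¹ * z σ * σ • g with hwdef
      have hw : ∀ σ τ : Γ, w (σ * τ) = w σ * σ • w τ := by
        intro σ τ
        simp only [hwdef, hz, mul_smul, smul_mul', smul_inv']
        group
      obtain ⟨h, hh, hh2⟩ := step_aux U i (hnormal (i + 1)) hstable
        (habelian i) (hinjcard i) (hsurjcard i) w hw hg
      refine ⟨g * h, fun σ => ?_⟩
      have : (g * h)⁻¹ * z σ * σ • (g * h) = h⁻¹ * w σ * σ • h := by
        simp only [hwdef, mul_inv_rev, smul_mul']
        group
      rw [this]
      exact hh2 σ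
  obtain ⟨g, hg⟩ := main n
  refine ⟨g⁻¹, fun σ => ?_⟩
  have := hg σ
  rw [hbot, Subgroup.mem_bot] at this
  rw [smul_inv']
  have h2 : z σ = g * (σ • g)⁻¹ := by
    have h3 : g * (g⁻¹ * z σ * σ • g) * (σ • g)⁻¹ = z σ := by group
    rw [← h3, this]; group
  rw [h2]; group
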